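/- arXiv:1712.03573 — 2 statements merged into one kernel-verified Lean document; each statement's English description precedes it below -/
import Mathlib

section
/- For every positive integer m, (1/m!) · ∑_{k=1}^{m} (-1)^{m-k} · C(m, k) · ∑_{j=1}^{k} (1/j) · (k^m - (k-j)^m) = H_m, where H_m is the m-th harmonic number. -/
open Finset

private lemma neg_one_pow_sub' (n k : ℕ) (h : k ≤ n) : (-1:ℚ)^(n-k) = (-1)^n * (-1)^k := by
  conv_rhs => rw [← Nat.sub_add_cancel h, pow_add, mul_assoc, ← pow_add, ← two_mul, pow_mul]
  simp

private lemma alt_sum_choose' (n : ℕ) (hn : n ≠ 0) :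
    ∑ k ∈ Finset.range (n+1), (-1:ℚ)^(n-k) * (n.choose k) = 0 := by
  have h0 : ∑ k ∈ Finset.range (n+1), (-1:ℚ)^k * (n.choose k) = 0 := by
    have := Int.alternating_sum_range_choose_of_ne (n := n) hn
    exact_mod_cast congrArg (fun z : ℤ => (z : ℚ)) this
  calc ∑ k ∈ Finset.range (n+1), (-1:ℚ)^(n-k) * (n.choose k)
      = (-1:ℚ)^n * ∑ k ∈ Finset.range (n+1), (-1:ℚ)^k * (n.choose k) := by
        rw [Finset.mul_sum]
        refine Finset.sum_congr rfl fun k hk => ?_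
        rw [neg_one_pow_sub' n k (Nat.lt_succ_iff.mp (Finset.mem_range.mp hk)), mul_assoc]
    _ = 0 := by rw [h0, mul_zero]

/-- The `m`-th finite difference of `k ↦ k^r` : zero for `r < m`, `m!` for `r = m`. -/
private lemma diff_pow' : ∀ m : ℕ, ∀ r : ℕ, r ≤ m →
    ∑ k ∈ Finset.range (m+1), (-1:ℚ)^(m-k) * (m.choose k) * (k:ℚ)^r
      = if r = m then (m.factorial : ℚ) else 0 := by
  intro m
  induction m with
  | zero =>
    intro r hr
    interval_cases r
    simp
  | succ m ih =>
    intro r hr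
    rcases Nat.eq_zero_or_pos r with hr0 | hr0
    · subst hr0
      simp only [pow_zero, mul_one, if_neg (Nat.succ_ne_zero m).symm]
      exact alt_sum_choose' (m+1) (Nat.succ_ne_zero m)
    · obtain ⟨s, rfl⟩ : ∃ s, r = s + 1 := ⟨r - 1, by omega⟩
      have hs : s ≤ m := by omega
      have key : ∑ k ∈ Finset.range (m+2), (-1:ℚ)^(m+1-k) * ((m+1).choose k) * (k:ℚ)^(s+1)
          = ∑ k ∈ Finset.range (m+1), (-1:ℚ)^(m-k) * (((m:ℚ)+1) * (m.choose k)) * ((k:ℚ)+1)^s := by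
        rw [Finset.sum_range_succ']
        simp only [Nat.cast_zero, zero_pow (by omega : s + 1 ≠ 0), mul_zero, add_zero]
        refine Finset.sum_congr rfl fun k hk => ?_
        have hcast : ((m:ℚ)+1) * (m.choose k) = (((m+1).choose (k+1) : ℚ)) * ((k:ℚ)+1) := by
          exact_mod_cast Nat.add_one_mul_choose_eq m k
        have hexp : (m + 1 - (k+1)) = m - k := by omega
        rw [hexp]
        push_cast
        rw [hcast]
        ring
      rw [key]
      have expand : ∀ k : ℕ, ((k:ℚ)+1)^s = ∑ t ∈ Finset.range (s+1), (s.choose t) * (k:ℚ)^t := by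
        intro k
        rw [add_pow]
        exact Finset.sum_congr rfl fun t ht => by ring
      calc ∑ k ∈ Finset.range (m+1), (-1:ℚ)^(m-k) * (((m:ℚ)+1) * (m.choose k)) * ((k:ℚ)+1)^s
          = ∑ t ∈ Finset.range (s+1), ((m:ℚ)+1) * (s.choose t) *
              ∑ k ∈ Finset.range (m+1), ((-1:ℚ)^(m-k) * (m.choose k) * (k:ℚ)^t) := by
            rw [show ∑ k ∈ Finset.range (m+1), (-1:ℚ)^(m-k) * (((m:ℚ)+1) * (m.choose k)) * ((k:ℚ)+1)^s
                = ∑ k ∈ Finset.range (m+1), ∑ t ∈ Finset.range (s+1),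
                    ((m:ℚ)+1) * (s.choose t) * ((-1:ℚ)^(m-k) * (m.choose k) * (k:ℚ)^t) from
              Finset.sum_congr rfl fun k _ => by
                rw [expand, Finset.mul_sum]; exact Finset.sum_congr rfl fun t _ => by ring]
            rw [Finset.sum_comm]
            exact Finset.sum_congr rfl fun t _ => (Finset.mul_sum _ _ _).symm
        _ = ∑ t ∈ Finset.range (s+1), ((m:ℚ)+1) * (s.choose t) *
              (if t = m then (m.factorial : ℚ) else 0) := by
            refine Finset.sum_congr rfl fun t ht => ?_
            rw [ih t (le_trans (Nat.lt_succ_iff.mp (Finset.mem_range.mp ht)) hs)]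
        _ = if s + 1 = m + 1 then ((m+1).factorial : ℚ) else 0 := by
            rcases eq_or_lt_of_le hs with h | h
            · subst h
              rw [if_pos rfl]
              rw [Finset.sum_eq_single s]
              · rw [if_pos rfl, Nat.choose_self]
                push_cast [Nat.factorial_succ]
                ring
              · intro t ht hne; simp [hne]
              · intro h; exact absurd (Finset.self_mem_range_succ s) h
            · rw [if_neg (by omega)]
              refine Finset.sum_eq_zero fun t ht => ?_
              have : t ≠ m := by have := Finset.mem_range.mp ht; omega
              simp [this]

private lemma reindex' (k s : ℕ) :
    ∑ j ∈ Finset.Icc 1 k, ((k:ℚ)-(j:ℚ))^s = ∑ i ∈ Finset.range k, (i:ℚ)^s := by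
  refine Finset.sum_nbij' (i := fun j => k - j) (j := fun i => k - i) ?_ ?_ ?_ ?_ ?_
  · intro a ha; simp only [Finset.mem_Icc] at ha; simp only [Finset.mem_range]; omega
  · intro a ha; simp only [Finset.mem_range] at ha; simp only [Finset.mem_Icc]; omega
  · intro a ha; simp only [Finset.mem_Icc] at ha; show k - (k - a) = a; omega
  · intro a ha; simp only [Finset.mem_range] at ha; show k - (k - a) = a; omega
  · intro a ha; simp only [Finset.mem_Icc] at ha
    rw [Nat.cast_sub ha.2]

/-- For every positive integer `m`,
`(1/m!) ∑_{k=1}^{m} (-1)^{m-k} C(m,k) ∑_{j=1}^{k} (1/j)(k^m - (k-j)^m) = H_m`. -/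
theorem stmt_5 (m : ℕ) (hm : 0 < m) :
    (1 / (m.factorial : ℚ)) *
      ∑ k ∈ Finset.Icc 1 m, (-1 : ℚ) ^ (m - k) * (m.choose k) *
        ∑ j ∈ Finset.Icc 1 k, (1 / (j : ℚ)) * ((k : ℚ) ^ m - ((k : ℚ) - (j : ℚ)) ^ m) =
      ∑ j ∈ Finset.Icc 1 m, (1 : ℚ) / j := by
  -- the rewritten inner summand
  set c : ℕ → ℕ → ℚ := fun t i => bernoulli i * ((m-1-t+1).choose i) / (((m-1-t : ℕ):ℚ)+1)
    with hc
  have inner_eq : ∀ k : ℕ,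
      ∑ j ∈ Finset.Icc 1 k, (1 / (j : ℚ)) * ((k : ℚ) ^ m - ((k : ℚ) - (j : ℚ)) ^ m)
      = ∑ t ∈ Finset.range m, ∑ i ∈ Finset.range (m-1-t+1), c t i * (k:ℚ)^(m-i) := by
    intro k
    calc ∑ j ∈ Finset.Icc 1 k, (1/(j:ℚ)) * ((k:ℚ)^m - ((k:ℚ)-(j:ℚ))^m)
        = ∑ j ∈ Finset.Icc 1 k, ∑ t ∈ Finset.range m, (k:ℚ)^t * ((k:ℚ)-(j:ℚ))^(m-1-t) := by
          refine Finset.sum_congr rfl fun j hj => ?_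
          have hj1 := Finset.mem_Icc.mp hj
          have hjne : (j:ℚ) ≠ 0 := Nat.cast_ne_zero.mpr (by omega)
          have hgeom := geom_sum₂_mul (k:ℚ) ((k:ℚ)-(j:ℚ)) m
          rw [show (k:ℚ) - ((k:ℚ)-(j:ℚ)) = (j:ℚ) from by ring] at hgeom
          rw [← hgeom]
          field_simp
      _ = ∑ t ∈ Finset.range m, (k:ℚ)^t * ∑ j ∈ Finset.Icc 1 k, ((k:ℚ)-(j:ℚ))^(m-1-t) := by
          rw [Finset.sum_comm]
          exact Finset.sum_congr rfl fun t _ => (Finset.mul_sum _ _ _).symm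
      _ = ∑ t ∈ Finset.range m, (k:ℚ)^t * ∑ i ∈ Finset.range k, (i:ℚ)^(m-1-t) :=
          Finset.sum_congr rfl fun t _ => by rw [reindex']
      _ = ∑ t ∈ Finset.range m, (k:ℚ)^t * ∑ i ∈ Finset.range (m-1-t+1),
            bernoulli i * ((m-1-t+1).choose i) * (k:ℚ)^(m-1-t+1-i) / (((m-1-t : ℕ):ℚ)+1) :=
          Finset.sum_congr rfl fun t _ => by rw [sum_range_pow]
      _ = _ := by
          refine Finset.sum_congr rfl fun t ht => ?_
          rw [Finset.mul_sum]
          refine Finset.sum_congr rfl fun i hi => ?_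
          have ht' := Finset.mem_range.mp ht
          have hi' := Finset.mem_range.mp hi
          rw [hc]
          rw [show m - i = t + (m-1-t+1-i) from by omega, pow_add]
          ring
  -- extend the outer sum to k = 0
  have ext_sum : ∑ k ∈ Finset.Icc 1 m, (-1 : ℚ) ^ (m - k) * (m.choose k) *
        ∑ t ∈ Finset.range m, ∑ i ∈ Finset.range (m-1-t+1), c t i * (k:ℚ)^(m-i)
      = ∑ k ∈ Finset.range (m+1), (-1 : ℚ) ^ (m - k) * (m.choose k) *
        ∑ t ∈ Finset.range m, ∑ i ∈ Finset.range (m-1-t+1), c t i * (k:ℚ)^(m-i) := by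
    have split : ∀ (f : ℕ → ℚ), f 0 = 0 →
        ∑ k ∈ Finset.range (m+1), f k = ∑ k ∈ Finset.Icc 1 m, f k := by
      intro f hf
      rw [Finset.range_eq_Ico, Finset.sum_eq_sum_Ico_succ_bot (by omega : 0 < m + 1), hf,
        zero_add, ← Finset.Ico_add_one_right_eq_Icc]
    have h0 : ∑ t ∈ Finset.range m, ∑ i ∈ Finset.range (m-1-t+1),
        c t i * ((0:ℕ):ℚ)^(m-i) = 0 := by
      refine Finset.sum_eq_zero fun t ht => Finset.sum_eq_zero fun i hi => ?_
      have ht' := Finset.mem_range.mp ht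
      have hi' := Finset.mem_range.mp hi
      rw [Nat.cast_zero, zero_pow (by omega : m - i ≠ 0), mul_zero]
    refine (split _ ?_).symm
    rw [h0, mul_zero]
  -- swap sums and apply diff_pow'
  have swap : ∑ k ∈ Finset.range (m+1), (-1 : ℚ) ^ (m - k) * (m.choose k) *
        ∑ t ∈ Finset.range m, ∑ i ∈ Finset.range (m-1-t+1), c t i * (k:ℚ)^(m-i)
      = ∑ t ∈ Finset.range m, ∑ i ∈ Finset.range (m-1-t+1), c t i *
        ∑ k ∈ Finset.range (m+1), (-1 : ℚ) ^ (m - k) * (m.choose k) * (k:ℚ)^(m-i) := by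
    rw [show ∀ (f : ℕ → ℕ → ℕ → ℚ), ∑ k ∈ Finset.range (m+1), (-1 : ℚ) ^ (m - k) * (m.choose k) *
        ∑ t ∈ Finset.range m, ∑ i ∈ Finset.range (m-1-t+1), f k t i
        = ∑ k ∈ Finset.range (m+1), ∑ t ∈ Finset.range m, ∑ i ∈ Finset.range (m-1-t+1),
            (-1 : ℚ) ^ (m - k) * (m.choose k) * f k t i from fun f =>
      Finset.sum_congr rfl fun k _ => by
        rw [Finset.mul_sum]; exact Finset.sum_congr rfl fun t _ => Finset.mul_sum _ _ _]
    rw [Finset.sum_comm]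
    refine Finset.sum_congr rfl fun t _ => ?_
    rw [Finset.sum_comm]
    refine Finset.sum_congr rfl fun i _ => ?_
    rw [Finset.mul_sum]
    exact Finset.sum_congr rfl fun k _ => by ring
  have eval : ∑ t ∈ Finset.range m, ∑ i ∈ Finset.range (m-1-t+1), c t i *
        ∑ k ∈ Finset.range (m+1), (-1 : ℚ) ^ (m - k) * (m.choose k) * (k:ℚ)^(m-i)
      = (m.factorial : ℚ) * ∑ t ∈ Finset.range m, 1 / (((m-t : ℕ):ℚ)) := by
    rw [Finset.mul_sum]
    refine Finset.sum_congr rfl fun t ht => ?_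
    have ht' := Finset.mem_range.mp ht
    rw [Finset.sum_eq_single 0]
    · rw [diff_pow' m (m-0) (by omega), if_pos (by omega)]
      rw [hc]
      simp only [bernoulli_zero, Nat.choose_zero_right, Nat.cast_one, mul_one, one_mul]
      have e : ((m-1-t : ℕ):ℚ) + 1 = ((m-t : ℕ):ℚ) := by
        rw [show (m-t) = (m-1-t) + 1 from by omega]; push_cast; ring
      rw [e]; ring
    · intro i hi hne
      have hi' := Finset.mem_range.mp hi
      rw [diff_pow' m (m-i) (by omega), if_neg (by omega), mul_zero]
    · intro h; exact absurd (Finset.mem_range.mpr (by omega)) h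
  have harmonic : ∑ t ∈ Finset.range m, 1 / (((m-t : ℕ):ℚ)) = ∑ j ∈ Finset.Icc 1 m, (1:ℚ)/j := by
    rw [← Finset.sum_range_reflect]
    rw [show ∑ j ∈ Finset.range m, (1:ℚ) / ((m - (m - 1 - j) : ℕ):ℚ)
        = ∑ j ∈ Finset.range m, (1:ℚ) / ((1 + j : ℕ):ℚ) from
      Finset.sum_congr rfl fun j hj => by
        have := Finset.mem_range.mp hj
        rw [show m - (m - 1 - j) = 1 + j from by omega]]
    rw [← Finset.Ico_add_one_right_eq_Icc, Finset.sum_Ico_eq_sum_range]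
    simp
  calc (1 / (m.factorial : ℚ)) *
      ∑ k ∈ Finset.Icc 1 m, (-1 : ℚ) ^ (m - k) * (m.choose k) *
        ∑ j ∈ Finset.Icc 1 k, (1 / (j : ℚ)) * ((k : ℚ) ^ m - ((k : ℚ) - (j : ℚ)) ^ m)
      = (1 / (m.factorial : ℚ)) * ((m.factorial : ℚ) * ∑ j ∈ Finset.Icc 1 m, (1:ℚ)/j) := by
        rw [show ∑ k ∈ Finset.Icc 1 m, (-1 : ℚ) ^ (m - k) * (m.choose k) *
            ∑ j ∈ Finset.Icc 1 k, (1 / (j : ℚ)) * ((k : ℚ) ^ m - ((k : ℚ) - (j : ℚ)) ^ m)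
          = ∑ k ∈ Finset.Icc 1 m, (-1 : ℚ) ^ (m - k) * (m.choose k) *
            ∑ t ∈ Finset.range m, ∑ i ∈ Finset.range (m-1-t+1), c t i * (k:ℚ)^(m-i) from
          Finset.sum_congr rfl fun k _ => by rw [inner_eq]]
        rw [ext_sum, swap, eval, harmonic]
    _ = ∑ j ∈ Finset.Icc 1 m, (1:ℚ)/j := by
        have : (m.factorial : ℚ) ≠ 0 := Nat.cast_ne_zero.mpr m.factorial_ne_zero
        field_simp
end

section
/- Let T(x) = ∑_{n≥1} (n^{n-1}/n!) x^n be the tree function over ℚ. Then T(x)/(1 - T(x)) = ∑_{i≥1} (i^i / i!) x^i as formal power series. -/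
section Aux

open Finset Polynomial

lemma alt_sum : ∀ m n : ℕ, m < n →
    ∑ k ∈ range (n+1), (-1:ℚ)^k * (n.choose k) * (k:ℚ)^m = 0 := by
  intro m
  induction m using Nat.strong_induction_on with
  | _ m ih =>
    intro n hmn
    match m with
    | 0 =>
      simp only [pow_zero, mul_one]
      have h := Int.alternating_sum_range_choose_of_ne (n := n) (by omega)
      have h2 : ((∑ i ∈ range (n+1), (-1:ℤ)^i * (n.choose i) : ℤ) : ℚ) = 0 := by
        rw [h]; norm_num
      push_cast at h2
      convert h2 using 2
    | m + 1 =>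
      rw [Finset.sum_range_succ']
      simp only [Nat.cast_zero, zero_pow (Nat.succ_ne_zero m), mul_zero, add_zero]
      have hn1 : n - 1 + 1 = n := by omega
      have hch : ∀ i : ℕ, ((n.choose (i+1)) : ℚ) * ((i:ℚ)+1) = n * ((n-1).choose i) := by
        intro i
        have h := Nat.add_one_mul_choose_eq (n-1) i
        simp only [Nat.succ_eq_add_one, hn1] at h
        exact_mod_cast congrArg (fun x : ℕ => (x:ℚ)) h.symm
      have hstep : ∑ i ∈ range n, (-1:ℚ)^(i+1) * (n.choose (i+1)) * (((i+1):ℕ):ℚ)^(m+1)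
          = -(n:ℚ) * ∑ i ∈ range n, (-1:ℚ)^i * ((n-1).choose i) * ((i:ℚ)+1)^m := by
        rw [Finset.mul_sum]
        refine Finset.sum_congr rfl fun i _ => ?_
        push_cast
        have h2 : ((i:ℚ)+1)^(m+1) = ((i:ℚ)+1)^m * ((i:ℚ)+1) := by ring
        rw [h2, pow_succ]
        linear_combination (-(-1:ℚ)^i * ((i:ℚ)+1)^m) * hch i
      rw [hstep]
      have hS : ∑ i ∈ range n, (-1:ℚ)^i * ((n-1).choose i) * ((i:ℚ)+1)^m = 0 := by
        have hexp : ∀ i : ℕ, ((i:ℚ)+1)^m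
            = ∑ j ∈ range (m+1), (i:ℚ)^j * (m.choose j) := by
          intro i
          rw [add_pow]
          exact Finset.sum_congr rfl fun j _ => by norm_num
        calc ∑ i ∈ range n, (-1:ℚ)^i * ((n-1).choose i) * ((i:ℚ)+1)^m
            = ∑ i ∈ range n, ∑ j ∈ range (m+1),
                (m.choose j : ℚ) * ((-1:ℚ)^i * ((n-1).choose i) * (i:ℚ)^j) := by
              refine Finset.sum_congr rfl fun i _ => ?_
              rw [hexp i, Finset.mul_sum]
              exact Finset.sum_congr rfl fun j _ => by ring
          _ = ∑ j ∈ range (m+1), (m.choose j : ℚ) *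
                ∑ i ∈ range n, (-1:ℚ)^i * ((n-1).choose i) * (i:ℚ)^j := by
              rw [Finset.sum_comm]
              exact Finset.sum_congr rfl fun j _ => by rw [Finset.mul_sum]
          _ = 0 := by
              refine Finset.sum_eq_zero fun j hj => ?_
              have hj' : j < m + 1 := Finset.mem_range.mp hj
              have := ih j hj' (n-1) (by omega)
              rw [hn1] at this
              rw [this, mul_zero]
      rw [hS, mul_zero]


lemma key_poly : ∀ n : ℕ, 1 ≤ n → ∀ a : ℚ,
    ∑ k ∈ Finset.Icc 1 n, C ((n.choose k : ℚ) * (k:ℚ)^(k-1)) *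
      (X + C (a + ((n-k : ℕ) : ℚ)))^(n-k)
      = C (n:ℚ) * (X + C (a + n))^(n-1) := by
  intro n
  induction n with
  | zero => omega
  | succ n ihn =>
    intro _ a
    rcases Nat.eq_zero_or_pos n with rfl | hn
    · simp
    set L : ℚ[X] := ∑ k ∈ Finset.Icc 1 (n+1), C (((n+1).choose k : ℚ) * (k:ℚ)^(k-1)) *
      (X + C (a + (((n+1)-k : ℕ) : ℚ)))^((n+1)-k) with hL
    set R : ℚ[X] := C ((n+1:ℕ):ℚ) * (X + C (a + ((n+1:ℕ):ℚ)))^((n+1)-1) with hR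
    have hIcc : Finset.Icc 1 (n+1) = insert (n+1) (Finset.Icc 1 n) := by
      ext x; simp [Finset.mem_Icc]; omega
    have hD : derivative (L - R) = 0 := by
      rw [derivative_sub]
      have hdL : derivative L = C ((n+1:ℕ):ℚ) * (C (n:ℚ) * (X + C ((a+1) + n))^(n-1)) := by
        rw [hL, derivative_sum]
        have step : ∀ k ∈ Finset.Icc 1 (n+1),
            derivative (C (((n+1).choose k : ℚ) * (k:ℚ)^(k-1)) *
              (X + C (a + (((n+1)-k : ℕ) : ℚ)))^((n+1)-k))
            = C ((n+1:ℕ):ℚ) * (C ((n.choose k : ℚ) * (k:ℚ)^(k-1)) *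
              (X + C ((a+1) + ((n-k : ℕ) : ℚ)))^(n-k)) := by
          intro k hk
          rw [Finset.mem_Icc] at hk
          rw [derivative_C_mul, derivative_pow, derivative_add, derivative_X, derivative_C,
            add_zero, mul_one]
          rcases Nat.lt_or_ge k (n+1) with hlt | hge
          · have h1 : (n+1) - k - 1 = n - k := by omega
            have h2 : a + (((n+1)-k : ℕ) : ℚ) = (a+1) + ((n-k : ℕ) : ℚ) := by
              have h : (n+1) - k = (n-k) + 1 := by omega
              rw [h]; push_cast; ring
            rw [h1, h2]
            have h4 : (((n+1)-k : ℕ) : ℚ) * ((n+1).choose k : ℚ)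
                = ((n+1:ℕ):ℚ) * (n.choose k : ℚ) := by
              have h := Nat.choose_mul_succ_eq n k
              have h' := congrArg (Nat.cast : ℕ → ℚ) h
              push_cast at h' ⊢
              linarith
            have h5 : C (((n+1).choose k : ℚ) * (k:ℚ)^(k-1)) * (((n+1)-k : ℕ) : ℚ[X])
                = C ((n+1:ℕ):ℚ) * C ((n.choose k : ℚ) * (k:ℚ)^(k-1)) := by
              rw [← C_eq_natCast, ← C_mul, ← C_mul]
              congr 1
              linear_combination (k:ℚ)^(k-1) * h4
            calc C (((n+1).choose k : ℚ) * (k:ℚ)^(k-1)) *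
                  ((((n+1)-k : ℕ) : ℚ[X]) * (X + C ((a+1) + ((n-k : ℕ) : ℚ)))^(n-k))
                = (C (((n+1).choose k : ℚ) * (k:ℚ)^(k-1)) * (((n+1)-k : ℕ) : ℚ[X])) *
                  (X + C ((a+1) + ((n-k : ℕ) : ℚ)))^(n-k) := by ring
              _ = _ := by rw [h5]; ring
          · have hk1 : k = n+1 := by omega
            subst hk1
            simp
        rw [Finset.sum_congr rfl step, ← Finset.mul_sum]
        congr 1
        rw [hIcc, Finset.sum_insert (by simp), Nat.choose_succ_self]
        simp only [Nat.cast_zero, zero_mul, map_zero, zero_mul, zero_add]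
        exact ihn hn (a+1)
      rw [hdL, hR]
      rw [derivative_C_mul, derivative_pow, derivative_add, derivative_X, derivative_C,
        add_zero, mul_one]
      have h6 : (a+1) + (n:ℚ) = a + ((n+1:ℕ):ℚ) := by push_cast; ring
      rw [h6]
      simp only [Nat.add_sub_cancel]
      exact sub_self _
    have hcst := Polynomial.eq_C_of_derivative_eq_zero hD
    have hE : eval (-(a + ((n+1:ℕ):ℚ))) (L - R) = 0 := by
      rw [eval_sub]
      have hRe : eval (-(a + ((n+1:ℕ):ℚ))) R = 0 := by
        rw [hR]
        simp only [eval_mul, eval_C, eval_pow, eval_add, eval_X]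
        have h7 : -(a + ((n+1:ℕ):ℚ)) + (a + ((n+1:ℕ):ℚ)) = 0 := by ring
        rw [h7, zero_pow (by omega : (n+1)-1 ≠ 0), mul_zero]
      have hLe : eval (-(a + ((n+1:ℕ):ℚ))) L = 0 := by
        rw [hL, eval_finset_sum]
        have hterm : ∀ k ∈ Finset.Icc 1 (n+1),
            eval (-(a + ((n+1:ℕ):ℚ))) (C (((n+1).choose k : ℚ) * (k:ℚ)^(k-1)) *
              (X + C (a + (((n+1)-k : ℕ) : ℚ)))^((n+1)-k))
            = (-1:ℚ)^(n+1) * ((-1:ℚ)^k * ((n+1).choose k : ℚ) * (k:ℚ)^n) := by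
          intro k hk
          rw [Finset.mem_Icc] at hk
          simp only [eval_mul, eval_C, eval_pow, eval_add, eval_X]
          have hx : -(a + ((n+1:ℕ):ℚ)) + (a + (((n+1)-k : ℕ) : ℚ)) = -(k:ℚ) := by
            have h : (n+1) - k + k = n+1 := by omega
            have h' := congrArg (Nat.cast : ℕ → ℚ) h
            push_cast at h' ⊢
            linarith
          rw [hx]
          have hneg : (-(k:ℚ))^((n+1)-k) = (-1:ℚ)^((n+1)-k) * (k:ℚ)^((n+1)-k) := by
            rw [neg_pow]
          rw [hneg]
          have hpow : (k:ℚ)^(k-1) * (k:ℚ)^((n+1)-k) = (k:ℚ)^n := by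
            rw [← pow_add]
            congr 1
            omega
          have hsign : (-1:ℚ)^((n+1)-k) * (-1:ℚ)^k = (-1:ℚ)^(n+1) := by
            rw [← pow_add]
            congr 1
            omega
          have hkk : (-1:ℚ)^k * (-1:ℚ)^k = 1 := by
            rw [← pow_add]
            exact Even.neg_one_pow ⟨k, rfl⟩
          rw [show ((n+1).choose k : ℚ) * (k:ℚ)^(k-1) *
                ((-1:ℚ)^((n+1)-k) * (k:ℚ)^((n+1)-k))
              = (-1:ℚ)^((n+1)-k) * ((n+1).choose k : ℚ) *
                ((k:ℚ)^(k-1) * (k:ℚ)^((n+1)-k)) from by ring, hpow, ← hsign]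
          linear_combination (-((-1:ℚ)^((n+1)-k) * ((n+1).choose k : ℚ) * (k:ℚ)^n)) * hkk
        rw [Finset.sum_congr rfl hterm, ← Finset.mul_sum]
        have h0 : ∑ k ∈ Finset.Icc 1 (n+1), (-1:ℚ)^k * ((n+1).choose k : ℚ) * (k:ℚ)^n = 0 := by
          have h := alt_sum n (n+1) (by omega)
          rw [← h]
          refine Finset.sum_subset (fun x hx => ?_) (fun x hx hx2 => ?_)
          · rw [Finset.mem_Icc] at hx; rw [Finset.mem_range]; omega
          · rw [Finset.mem_range] at hx; rw [Finset.mem_Icc] at hx2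
            have : x = 0 := by omega
            subst this
            rw [Nat.cast_zero, zero_pow (by omega : n ≠ 0), mul_zero]
        rw [h0, mul_zero]
      rw [hRe, hLe, sub_zero]
    rw [hcst, eval_C] at hE
    exact sub_eq_zero.mp (by rw [hcst, hE, map_zero])

lemma key_nat (n : ℕ) (hn : 1 ≤ n) :
    ∑ k ∈ Finset.Icc 1 n, (n.choose k : ℚ) * (k:ℚ)^(k-1) * ((n-k : ℕ) : ℚ)^(n-k)
      = (n:ℚ)^n := by
  have h := congrArg (eval (0:ℚ)) (key_poly n hn 0)
  rw [eval_finset_sum] at h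
  simp only [eval_mul, eval_C, eval_pow, eval_add, eval_X, zero_add] at h
  rw [h]
  rw [show (n:ℚ)^n = (n:ℚ)^(n-1) * (n:ℚ) from by
    rw [← pow_succ]; congr 1; omega]
  ring

lemma main_sum (n : ℕ) (hn : 1 ≤ n) :
    ∑ k ∈ range (n+1),
      (if k = 0 then 0 else (k:ℚ)^(k-1)/(k.factorial : ℚ)) *
      (if n - k = 0 then 0 else ((n-k : ℕ):ℚ)^(n-k)/((n-k).factorial : ℚ))
    = (n:ℚ)^n / (n.factorial : ℚ) - (n:ℚ)^(n-1)/(n.factorial : ℚ) := by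
  have hres : ∑ k ∈ range (n+1),
      (if k = 0 then 0 else (k:ℚ)^(k-1)/(k.factorial : ℚ)) *
      (if n - k = 0 then 0 else ((n-k : ℕ):ℚ)^(n-k)/((n-k).factorial : ℚ))
      = ∑ k ∈ Finset.Icc 1 (n-1),
        ((n.choose k : ℚ) * (k:ℚ)^(k-1) * ((n-k : ℕ) : ℚ)^(n-k)) / (n.factorial : ℚ) := by
    rw [← Finset.sum_subset (f := fun k => (if k = 0 then 0 else (k:ℚ)^(k-1)/(k.factorial : ℚ)) *
      (if n - k = 0 then 0 else ((n-k : ℕ):ℚ)^(n-k)/((n-k).factorial : ℚ)))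
      (s₁ := Finset.Icc 1 (n-1))
      (fun x hx => by rw [Finset.mem_Icc] at hx; rw [Finset.mem_range]; omega)
      (fun x hx hx2 => by
        rw [Finset.mem_range] at hx; rw [Finset.mem_Icc] at hx2
        rcases (by omega : x = 0 ∨ n - x = 0) with h | h
        · simp [h]
        · simp [h])]
    refine Finset.sum_congr rfl fun k hk => ?_
    rw [Finset.mem_Icc] at hk
    rw [if_neg (by omega), if_neg (by omega)]
    have hfac : (n.choose k : ℚ) * (k.factorial : ℚ) * ((n-k).factorial : ℚ)
        = (n.factorial : ℚ) := by
      exact_mod_cast congrArg (Nat.cast : ℕ → ℚ)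
        (Nat.choose_mul_factorial_mul_factorial (by omega : k ≤ n))
    have h1 : (k.factorial : ℚ) ≠ 0 := Nat.cast_ne_zero.mpr k.factorial_ne_zero
    have h2 : ((n-k).factorial : ℚ) ≠ 0 := Nat.cast_ne_zero.mpr (n-k).factorial_ne_zero
    have h3 : (n.factorial : ℚ) ≠ 0 := Nat.cast_ne_zero.mpr n.factorial_ne_zero
    field_simp
    linear_combination -hfac
  rw [hres, ← Finset.sum_div]
  have hsplit : Finset.Icc 1 n = insert n (Finset.Icc 1 (n-1)) := by
    ext x; simp only [Finset.mem_Icc, Finset.mem_insert]; omega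
  have hkey := key_nat n hn
  rw [hsplit, Finset.sum_insert (by rw [Finset.mem_Icc]; omega)] at hkey
  have htop : (n.choose n : ℚ) * (n:ℚ)^(n-1) * ((n-n : ℕ) : ℚ)^(n-n) = (n:ℚ)^(n-1) := by
    rw [Nat.choose_self, Nat.sub_self]
    norm_num
  rw [htop] at hkey
  rw [show ∑ k ∈ Finset.Icc 1 (n-1), (n.choose k : ℚ) * (k:ℚ)^(k-1) * ((n-k : ℕ) : ℚ)^(n-k)
      = (n:ℚ)^n - (n:ℚ)^(n-1) from by linarith]
  ring


end Aux

open PowerSeries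

/-- With `T(x) = ∑_{n ≥ 1} (n^{n-1}/n!) x^n` the tree function over `ℚ`,
`T/(1-T) = ∑_{i ≥ 1} (i^i/i!) x^i`, i.e. `(1 - T) * ∑_{i ≥ 1} (i^i/i!) x^i = T`. -/
theorem stmt_8 :
    (1 - PowerSeries.mk fun n => if n = 0 then 0 else (n : ℚ) ^ (n - 1) / n.factorial) *
        (PowerSeries.mk fun i => if i = 0 then 0 else (i : ℚ) ^ i / i.factorial) =
      PowerSeries.mk fun n => if n = 0 then 0 else (n : ℚ) ^ (n - 1) / n.factorial := by
  ext n
  rw [sub_mul, one_mul, map_sub, PowerSeries.coeff_mul]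
  simp only [PowerSeries.coeff_mk]
  rcases Nat.eq_zero_or_pos n with rfl | hn
  · simp
  · rw [Finset.Nat.sum_antidiagonal_eq_sum_range_succ_mk]
    simp only []
    rw [if_neg (by omega), if_neg (by omega), main_sum n hn]
    ring
end
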